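/- Let 𝒪 be an order ideal in P = K[x_0,…,x_n], fix a labeling of ∂𝒪 ordered increasingly by degree, and let G be a homogeneous ∂𝒪-prebasis. Then P = ⟨𝒯G⟩ ⊕ ⟨𝒪⟩ as K-vector spaces, and for every d ≥ 0 one has P_d = ⟨𝒯G_d⟩ ⊕ ⟨𝒪_d⟩. -/

import Mathlib

open MvPolynomial

namespace Border

/-- A term of `K[x_0, …, x_n]`, identified with its exponent vector. -/
abbrev Term (n : ℕ) := Fin (n + 1) →₀ ℕ

variable {n : ℕ}

/-- The (standard) degree of a term. -/
def tdeg (m : Term n) : ℕ := ∑ i, m i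

/-- An order ideal: a nonempty set of terms closed under divisors. -/
def IsOrderIdeal (O : Set (Term n)) : Prop :=
  O.Nonempty ∧ ∀ τ ∈ O, ∀ τ' : Term n, τ' ≤ τ → τ' ∈ O

/-- The border `∂𝒪 = (x_0·𝒪 ∪ ⋯ ∪ x_n·𝒪) ∖ 𝒪`. -/
def border (O : Set (Term n)) : Set (Term n) :=
  {σ | σ ∉ O ∧ ∃ r : Fin (n + 1), ∃ τ ∈ O, σ = τ + Finsupp.single r 1}

/-- Multiplicative set of a border term `σ`, with respect to a labeling `lab` of the border:
`𝒯_σ = {η : σ' ∤ η·σ for every border term σ' with a larger label}`. -/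
def mulSet (O : Set (Term n)) (lab : Term n → ℕ) (σ : Term n) : Set (Term n) :=
  {η | ∀ σ' ∈ border O, lab σ < lab σ' → ¬ σ' ≤ η + σ}

/-- The cone `C(σ) = {η·σ : η ∈ 𝒯_σ}`. -/
def cone (O : Set (Term n)) (lab : Term n → ℕ) (σ : Term n) : Set (Term n) :=
  (fun η => η + σ) '' mulSet O lab σ

/-- A labeling of the border which is injective and ordered increasingly by degree. -/
def DegOrderedLabeling (O : Set (Term n)) (lab : Term n → ℕ) : Prop :=
  Set.InjOn lab (border O) ∧
    ∀ σ ∈ border O, ∀ σ' ∈ border O, lab σ < lab σ' → tdeg σ ≤ tdeg σ'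

/-- Iterated border closures: `∂⁰𝒪 := 𝒪`, and the `(k+1)`-st closure adds the border. -/
def borderClosure (O : Set (Term n)) : ℕ → Set (Term n)
  | 0 => O
  | k + 1 => borderClosure O k ∪ border (borderClosure O k)

/-- The index `ind_𝒪(τ)`: the least `k` with `τ ∈ ∂^k𝒪`. -/
noncomputable def ind (O : Set (Term n)) (τ : Term n) : ℕ :=
  sInf {k | τ ∈ borderClosure O k}

/-- Degree-`d` part of a set of terms. -/
def Od (O : Set (Term n)) (d : ℕ) : Set (Term n) := {τ | τ ∈ O ∧ tdeg τ = d}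

variable {K : Type*} [Field K]

/-- The index of a nonzero polynomial: the maximal index of a term of its support. -/
noncomputable def indP (O : Set (Term n)) (f : MvPolynomial (Fin (n + 1)) K) : ℕ :=
  f.support.sup (ind O)

/-- A homogeneous `∂𝒪`-prebasis: a family `g σ = σ - Σ_{τ ∈ 𝒪_{deg σ}} c_{στ} τ`. -/
def IsPrebasis (O : Set (Term n)) (g : Term n → MvPolynomial (Fin (n + 1)) K) : Prop :=
  ∀ σ ∈ border O, ∀ τ ∈ (monomial σ (1 : K) - g σ).support, τ ∈ O ∧ tdeg τ = tdeg σ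

/-- The set of border reductors `𝒯G = {η·g_σ : σ ∈ ∂𝒪, η ∈ 𝒯_σ}`. -/
def reductors (O : Set (Term n)) (lab : Term n → ℕ)
    (g : Term n → MvPolynomial (Fin (n + 1)) K) : Set (MvPolynomial (Fin (n + 1)) K) :=
  {p | ∃ σ ∈ border O, ∃ η ∈ mulSet O lab σ, p = monomial η (1 : K) * g σ}

/-- The degree-`d` border reductors `𝒯G_d = 𝒯G ∩ P_d`. -/
def reductorsDeg (O : Set (Term n)) (lab : Term n → ℕ)
    (g : Term n → MvPolynomial (Fin (n + 1)) K) (d : ℕ) :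
    Set (MvPolynomial (Fin (n + 1)) K) :=
  reductors O lab g ∩ {p | p.IsHomogeneous d}

/-- One step of the border reduction relation `→_G`. -/
def Step (O : Set (Term n)) (lab : Term n → ℕ)
    (g : Term n → MvPolynomial (Fin (n + 1)) K)
    (f h : MvPolynomial (Fin (n + 1)) K) : Prop :=
  ∃ σ ∈ border O, ∃ η ∈ mulSet O lab σ, η + σ ∈ f.support ∧
    h = f - f.coeff (η + σ) • (monomial η (1 : K) * g σ)

/-- The border reduction relation `→⁺_G` (finitely many, possibly zero, steps). -/
def Reduces (O : Set (Term n)) (lab : Term n → ℕ)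
    (g : Term n → MvPolynomial (Fin (n + 1)) K) :
    MvPolynomial (Fin (n + 1)) K → MvPolynomial (Fin (n + 1)) K → Prop :=
  Relation.ReflTransGen (Step O lab g)

/-- The `K`-vector space spanned by a set of terms. -/
noncomputable def spanTerms (K : Type*) [Field K] (S : Set (Term n)) :
    Submodule K (MvPolynomial (Fin (n + 1)) K) :=
  Submodule.span K ((fun τ => monomial τ (1 : K)) '' S)

/-- The ideal `(G)` generated by a `∂𝒪`-prebasis. -/
noncomputable def idealG (O : Set (Term n)) (g : Term n → MvPolynomial (Fin (n + 1)) K) :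
    Ideal (MvPolynomial (Fin (n + 1)) K) :=
  Ideal.span (g '' border O)

/-- The degree-`d` part `I_d` of an ideal, as a `K`-vector subspace. -/
noncomputable def degPart (I : Ideal (MvPolynomial (Fin (n + 1)) K)) (d : ℕ) :
    Submodule K (MvPolynomial (Fin (n + 1)) K) :=
  Submodule.restrictScalars K I ⊓ homogeneousSubmodule (Fin (n + 1)) K d

/-- Homogeneous ideal. -/
def IsHomogeneousIdeal (I : Ideal (MvPolynomial (Fin (n + 1)) K)) : Prop :=
  ∀ f ∈ I, ∀ d : ℕ, homogeneousComponent d f ∈ I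

/-- `G` is a homogeneous `∂𝒪`-basis of `J`: it is a prebasis contained in `J` and for every
`d` one has `P_d = J_d ⊕ ⟨𝒪_d⟩`, i.e. the residue classes of `𝒪_d` are a basis of `P_d/J_d`. -/
def IsBorderBasisOf (O : Set (Term n)) (g : Term n → MvPolynomial (Fin (n + 1)) K)
    (J : Ideal (MvPolynomial (Fin (n + 1)) K)) : Prop :=
  IsPrebasis O g ∧ (∀ σ ∈ border O, g σ ∈ J) ∧
    ∀ d : ℕ, degPart J d ⊔ spanTerms K (Od O d) = homogeneousSubmodule (Fin (n + 1)) K d ∧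
      Disjoint (degPart J d) (spanTerms K (Od O d))

/-- An `m`-lower representation of `f` by `𝒯G`: `f = Σ c_j • η_j·g_{σ_j}` with distinct
pairs `(η_j, σ_j)`, `η_j ∈ 𝒯_{σ_j}` and `ind(η_j σ_j) ≤ m`. -/
def HasLRep (O : Set (Term n)) (lab : Term n → ℕ)
    (g : Term n → MvPolynomial (Fin (n + 1)) K)
    (f : MvPolynomial (Fin (n + 1)) K) (m : ℕ) : Prop :=
  ∃ (s : Finset (Term n × Term n)) (c : Term n × Term n → K),
    (∀ p ∈ s, p.2 ∈ border O ∧ p.1 ∈ mulSet O lab p.2 ∧ ind O (p.1 + p.2) ≤ m) ∧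
    f = ∑ p ∈ s, c p • (monomial p.1 (1 : K) * g p.2)

/-- An `m`-lower representation of `f` by `𝒯G_d`. -/
def HasLRepDeg (O : Set (Term n)) (lab : Term n → ℕ)
    (g : Term n → MvPolynomial (Fin (n + 1)) K)
    (f : MvPolynomial (Fin (n + 1)) K) (m d : ℕ) : Prop :=
  ∃ (s : Finset (Term n × Term n)) (c : Term n × Term n → K),
    (∀ p ∈ s, p.2 ∈ border O ∧ p.1 ∈ mulSet O lab p.2 ∧ ind O (p.1 + p.2) ≤ m ∧
      (monomial p.1 (1 : K) * g p.2).IsHomogeneous d) ∧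
    f = ∑ p ∈ s, c p • (monomial p.1 (1 : K) * g p.2)

/-- The subtype of terms of `𝒪` of degree `d`. -/
abbrev OdSub (O : Set (Term n)) (d : ℕ) : Type _ := {τ : Term n // τ ∈ Od O d}

lemma tdeg_component_lt {d : ℕ} (m : Term n) (h : tdeg m = d) (i : Fin (n + 1)) :
    m i < d + 1 := by
  have : m i ≤ tdeg m :=
    Finset.single_le_sum (f := fun j => m j) (fun j _ => Nat.zero_le _) (Finset.mem_univ i)
  omega

instance (O : Set (Term n)) (d : ℕ) : Finite (OdSub O d) := by
  have hinj : Function.Injective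
      (fun τ : OdSub O d => fun i : Fin (n + 1) =>
        (⟨τ.1 i, tdeg_component_lt τ.1 τ.2.2 i⟩ : Fin (d + 1))) := by
    intro a b hab
    apply Subtype.ext
    apply Finsupp.ext
    intro i
    simpa using congrArg Fin.val (congrFun hab i)
  exact Finite.of_injective _ hinj

noncomputable instance (O : Set (Term n)) (d : ℕ) : Fintype (OdSub O d) :=
  Fintype.ofFinite _

open scoped Classical in
/-- The `r`-th `d`-graded formal multiplication matrix of a prebasis `G`,
with rows indexed by `𝒪_{d+1}` and columns by `𝒪_d`. -/
noncomputable def multMatrix (O : Set (Term n))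
    (g : Term n → MvPolynomial (Fin (n + 1)) K) (r : Fin (n + 1)) (d : ℕ) :
    Matrix (OdSub O (d + 1)) (OdSub O d) K :=
  Matrix.of fun τ' τ =>
    if τ.1 + Finsupp.single r 1 ∈ O then
      (if τ.1 + Finsupp.single r 1 = τ'.1 then 1 else 0)
    else (monomial (τ.1 + Finsupp.single r 1) (1 : K)
            - g (τ.1 + Finsupp.single r 1)).coeff τ'.1

/-- The minimum degree of a border term. -/
noncomputable def minDegBorder (O : Set (Term n)) : ℕ := sInf (tdeg '' border O)

/-- The `d`-th Macaulay transformation `a^{⟨d⟩}`, computed greedily. -/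
noncomputable def macaulay : ℕ → ℕ → ℕ
  | 0, _ => 0
  | d + 1, a =>
    if a = 0 then 0
    else
      Nat.choose (sSup {k | Nat.choose k (d + 1) ≤ a} + 1) (d + 2) +
        macaulay d (a - Nat.choose (sSup {k | Nat.choose k (d + 1) ≤ a}) (d + 1))

/-- An ideal is generated in degrees `≤ m` if it is generated by its homogeneous
elements of degree `≤ m`. -/
def GeneratedInDegLE (I : Ideal (MvPolynomial (Fin (n + 1)) K)) (m : ℕ) : Prop :=
  I = Ideal.span {f | f ∈ I ∧ ∃ d ≤ m, f.IsHomogeneous d}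

-- ### auxiliary lemmas


lemma tdeg_add (a b : Term n) : tdeg (a + b) = tdeg a + tdeg b := by
  simp [tdeg, Finsupp.add_apply, Finset.sum_add_distrib]

lemma tdeg_eq_degree (m : Term n) : Finsupp.degree m = tdeg m := by
  rw [Finsupp.degree]
  exact Finset.sum_subset (Finset.subset_univ _)
    (by intro x _ hx; simpa using Finsupp.notMem_support_iff.mp hx)

lemma tdeg_single (r : Fin (n + 1)) : tdeg (Finsupp.single r 1 : Term n) = 1 := by
  rw [← tdeg_eq_degree, Finsupp.degree_single]

lemma tdeg_eq_zero {a : Term n} (h : tdeg a = 0) : a = 0 := by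
  ext i
  have := Finset.sum_eq_zero_iff.mp h i (Finset.mem_univ i)
  simpa using this

lemma zero_mem_of_orderIdeal {O : Set (Term n)} (hO : IsOrderIdeal O) : (0 : Term n) ∈ O := by
  obtain ⟨τ, hτ⟩ := hO.1
  exact hO.2 τ hτ 0 zero_le

lemma borderClosure_mono {O : Set (Term n)} : Monotone (borderClosure O) := by
  apply monotone_nat_of_le_succ
  intro k
  exact Set.subset_union_left

lemma mem_borderClosure_succ {O : Set (Term n)} {μ : Term n} {k : ℕ}
    (h : μ ∈ borderClosure O k) (r : Fin (n + 1)) :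
    μ + Finsupp.single r 1 ∈ borderClosure O (k + 1) := by
  by_cases h2 : μ + Finsupp.single r 1 ∈ borderClosure O k
  · exact Set.subset_union_left h2
  · exact Set.subset_union_right ⟨h2, r, μ, h, rfl⟩

lemma add_mem_borderClosure {O : Set (Term n)} {τ : Term n} {k : ℕ}
    (h : τ ∈ borderClosure O k) (η : Term n) :
    η + τ ∈ borderClosure O (k + tdeg η) := by
  suffices H : ∀ m (η : Term n), tdeg η = m → η + τ ∈ borderClosure O (k + tdeg η) from
    H (tdeg η) η rfl
  intro m
  induction m with
  | zero => intro η hd; rw [tdeg_eq_zero hd]; simpa [tdeg] using h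
  | succ m ih =>
    intro η hd
    have hne : η ≠ 0 := by rintro rfl; simp [tdeg] at hd
    obtain ⟨r, hr⟩ : ∃ r, η r ≠ 0 := by
      by_contra hc; push_neg at hc; exact hne (Finsupp.ext fun i => hc i)
    have hle : Finsupp.single r 1 ≤ η := by
      rw [Finsupp.le_def]; intro i
      rcases eq_or_ne i r with rfl | hi
      · simpa using Nat.one_le_iff_ne_zero.mpr hr
      · simp [Finsupp.single_apply, Ne.symm hi]
    set η' := η - Finsupp.single r 1 with hη'
    have hsplit : η = η' + Finsupp.single r 1 := (tsub_add_cancel_of_le hle).symm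
    have hdeg' : tdeg η' = m := by
      have := tdeg_add η' (Finsupp.single r 1)
      rw [← hsplit, tdeg_single] at this
      omega
    have := ih η' hdeg'
    have h2 := mem_borderClosure_succ this r
    have : η' + τ + Finsupp.single r 1 = η + τ := by
      rw [hsplit]; abel
    rw [this] at h2
    convert h2 using 2
    omega

lemma mem_borderClosure_tdeg {O : Set (Term n)} (hO : IsOrderIdeal O) (μ : Term n) :
    μ ∈ borderClosure O (tdeg μ) := by
  have := add_mem_borderClosure (k := 0) (τ := 0) (O := O)
    (zero_mem_of_orderIdeal hO) μ
  simpa using this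

lemma ind_le {O : Set (Term n)} {μ : Term n} {k : ℕ} (h : μ ∈ borderClosure O k) :
    ind O μ ≤ k := Nat.sInf_le h

lemma mem_borderClosure_ind {O : Set (Term n)} (hO : IsOrderIdeal O) (μ : Term n) :
    μ ∈ borderClosure O (ind O μ) :=
  Nat.sInf_mem (s := {k | μ ∈ borderClosure O k}) ⟨tdeg μ, mem_borderClosure_tdeg hO μ⟩

lemma ind_add_le {O : Set (Term n)} {τ : Term n} (hτ : τ ∈ O) (η : Term n) :
    ind O (η + τ) ≤ tdeg η := by
  have := add_mem_borderClosure (k := 0) (O := O) hτ η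
  simpa using ind_le this

lemma exists_border_div {O : Set (Term n)} {μ : Term n} {k : ℕ}
    (hμ : μ ∉ O) (h : μ ∈ borderClosure O k) :
    ∃ σ ∈ border O, ∃ η, μ = η + σ ∧ tdeg η + 1 ≤ k := by
  induction k generalizing μ with
  | zero => exact absurd h hμ
  | succ k ih =>
    rcases h with h | h
    · obtain ⟨σ, hσ, η, h1, h2⟩ := ih hμ h
      exact ⟨σ, hσ, η, h1, h2.trans (Nat.le_succ k)⟩
    · obtain ⟨hnot, r, ν, hν, rfl⟩ := h
      by_cases hνO : ν ∈ O
      · refine ⟨ν + Finsupp.single r 1, ⟨hμ, r, ν, hνO, rfl⟩, 0, by rw [zero_add], ?_⟩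
        simp [tdeg]
      · obtain ⟨σ, hσ, η, h1, h2⟩ := ih hνO hν
        refine ⟨σ, hσ, η + Finsupp.single r 1, ?_, ?_⟩
        · rw [h1]; abel
        · rw [tdeg_add, tdeg_single]; omega

lemma pivot_not_mem {O : Set (Term n)} (hO : IsOrderIdeal O) {σ : Term n}
    (hσ : σ ∈ border O) (η : Term n) : η + σ ∉ O := by
  intro h
  exact hσ.1 (hO.2 _ h σ le_add_self)

lemma exists_canonical {O : Set (Term n)} (hO : IsOrderIdeal O) {lab : Term n → ℕ}
    (hlab : DegOrderedLabeling O lab) {μ : Term n} (hμ : μ ∉ O) :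
    ∃ σ ∈ border O, ∃ η ∈ mulSet O lab σ, μ = η + σ ∧ tdeg η + 1 ≤ ind O μ := by
  set D : Set (Term n) := {σ | σ ∈ border O ∧ σ ≤ μ} with hD
  have hfin : D.Finite := (Set.finite_Iic μ).subset (fun σ hσ => hσ.2)
  have hne : D.Nonempty := by
    obtain ⟨σ, hσ, η, h1, _⟩ := exists_border_div hμ (mem_borderClosure_ind hO μ)
    exact ⟨σ, hσ, h1 ▸ le_add_self⟩
  obtain ⟨σ, hσD, hmax⟩ := hfin.exists_maximalFor lab D hne
  have hlabmax : ∀ σ' ∈ D, ¬ lab σ < lab σ' := by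
    intro σ' hσ' hlt
    exact absurd (hmax hσ' hlt.le) (not_le.mpr hlt)
  refine ⟨σ, hσD.1, μ - σ, ?_, (tsub_add_cancel_of_le hσD.2).symm, ?_⟩
  · intro σ' hσ' hlt hle
    rw [tsub_add_cancel_of_le hσD.2] at hle
    exact hlabmax σ' ⟨hσ', hle⟩ hlt
  · obtain ⟨σ₁, hσ₁, η₁, h1, h2⟩ := exists_border_div hμ (mem_borderClosure_ind hO μ)
    have hσ₁D : σ₁ ∈ D := ⟨hσ₁, h1 ▸ le_add_self⟩
    have hdle : tdeg σ₁ ≤ tdeg σ := by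
      rcases lt_trichotomy (lab σ₁) (lab σ) with hl | hl | hl
      · exact hlab.2 σ₁ hσ₁ σ hσD.1 hl
      · rw [hlab.1 hσ₁ hσD.1 hl]
      · exact absurd hl (hlabmax σ₁ hσ₁D)
    have e1 : tdeg (μ - σ) + tdeg σ = tdeg μ := by
      rw [← tdeg_add, tsub_add_cancel_of_le hσD.2]
    have e2 : tdeg η₁ + tdeg σ₁ = tdeg μ := by rw [← tdeg_add, ← h1]
    omega

lemma canonical_unique {O : Set (Term n)} {lab : Term n → ℕ}
    (hlab : DegOrderedLabeling O lab) {σ σ' η η' : Term n}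
    (hσ : σ ∈ border O) (hη : η ∈ mulSet O lab σ)
    (hσ' : σ' ∈ border O) (hη' : η' ∈ mulSet O lab σ')
    (heq : η + σ = η' + σ') : σ = σ' ∧ η = η' := by
  have h1 : ¬ lab σ < lab σ' := fun hlt => hη σ' hσ' hlt (heq ▸ le_add_self)
  have h2 : ¬ lab σ' < lab σ := fun hlt => hη' σ hσ hlt (heq.symm ▸ le_add_self)
  have hl : lab σ = lab σ' := le_antisymm (not_lt.mp h2) (not_lt.mp h1)
  have hss : σ = σ' := hlab.1 hσ hσ' hl
  subst hss
  exact ⟨rfl, by ext i; have := congrArg (fun f : Term n => f i) heq; simpa using this⟩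




lemma reductor_eq {g : Term n → MvPolynomial (Fin (n + 1)) K}
    {σ : Term n} (η : Term n) :
    monomial η (1 : K) * g σ = monomial (η + σ) 1 -
      ∑ τ ∈ (monomial σ (1 : K) - g σ).support,
        ((monomial σ (1 : K) - g σ).coeff τ) • monomial (η + τ) (1 : K) := by
  set t := monomial σ (1 : K) - g σ with ht
  have hgσ : g σ = monomial σ (1 : K) - t := by rw [ht]; ring
  rw [hgσ, mul_sub, monomial_mul, mul_one]
  congr 1
  conv_lhs => rw [t.as_sum]
  rw [Finset.mul_sum]
  refine Finset.sum_congr rfl fun τ hτ => ?_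
  rw [monomial_mul, one_mul, smul_monomial, smul_eq_mul, mul_one]

lemma coeff_t_self {O : Set (Term n)} {g : Term n → MvPolynomial (Fin (n + 1)) K}
    (hg : IsPrebasis O g) {σ : Term n} (hσ : σ ∈ border O) :
    σ ∉ (monomial σ (1 : K) - g σ).support := by
  intro hmem
  exact hσ.1 (hg σ hσ σ hmem).1

lemma coeff_pivot {O : Set (Term n)} {g : Term n → MvPolynomial (Fin (n + 1)) K}
    (hg : IsPrebasis O g) {σ : Term n} (hσ : σ ∈ border O) (η : Term n) :
    (monomial η (1 : K) * g σ).coeff (η + σ) = 1 := by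
  classical
  rw [reductor_eq η, coeff_sub, coeff_sum]
  rw [coeff_monomial, if_pos rfl]
  have : ∀ τ ∈ (monomial σ (1 : K) - g σ).support,
      ((monomial σ (1 : K) - g σ).coeff τ • monomial (η + τ) (1 : K)).coeff (η + σ) = 0 := by
    intro τ hτ
    have hτσ : τ ≠ σ := fun h => coeff_t_self hg hσ (h ▸ hτ)
    rw [coeff_smul, coeff_monomial, if_neg (by
      intro h
      exact hτσ (add_left_cancel h)), smul_zero]
  rw [Finset.sum_eq_zero this, sub_zero]

lemma support_reductor {g : Term n → MvPolynomial (Fin (n + 1)) K}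
    {σ : Term n} (η : Term n) {ν : Term n}
    (hν : ν ∈ (monomial η (1 : K) * g σ).support) :
    ν = η + σ ∨ ∃ τ ∈ (monomial σ (1 : K) - g σ).support, ν = η + τ := by
  classical
  rw [reductor_eq η] at hν
  have h1 := support_sub _ _ _ hν
  rw [Finset.mem_union] at h1
  rcases h1 with h1 | h1
  · left
    rw [support_monomial] at h1
    simpa using h1
  · right
    have h2 := MvPolynomial.support_sum h1
    rw [Finset.mem_biUnion] at h2
    obtain ⟨τ, hτ, hmem⟩ := h2
    refine ⟨τ, hτ, ?_⟩
    have := support_smul hmem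
    rw [support_monomial] at this
    simpa using this

lemma g_isHomogeneous {O : Set (Term n)} {g : Term n → MvPolynomial (Fin (n + 1)) K}
    (hg : IsPrebasis O g) {σ : Term n} (hσ : σ ∈ border O) :
    (g σ).IsHomogeneous (tdeg σ) := by
  have ht : (monomial σ (1 : K) - g σ).IsHomogeneous (tdeg σ) := by
    intro d hd
    have hds : d ∈ (monomial σ (1 : K) - g σ).support := by
      rw [MvPolynomial.mem_support_iff]; exact hd
    have := (hg σ hσ d hds).2
    rw [← DFunLike.congr_fun (g := Finsupp.weight 1) Finsupp.degree_eq_weight_one d, tdeg_eq_degree, this]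
  have hm : ((monomial σ (1 : K)) : MvPolynomial (Fin (n + 1)) K).IsHomogeneous (tdeg σ) :=
    isHomogeneous_monomial _ (tdeg_eq_degree σ)
  have : g σ = monomial σ (1 : K) - (monomial σ (1 : K) - g σ) := by ring
  rw [this]
  exact hm.sub ht

lemma reductor_isHomogeneous {O : Set (Term n)} {g : Term n → MvPolynomial (Fin (n + 1)) K}
    (hg : IsPrebasis O g) {σ : Term n} (hσ : σ ∈ border O) (η : Term n) :
    (monomial η (1 : K) * g σ).IsHomogeneous (tdeg (η + σ)) := by
  rw [tdeg_add]
  exact (isHomogeneous_monomial _ (tdeg_eq_degree η)).mul (g_isHomogeneous hg hσ)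

lemma monomial_mem_sup {O : Set (Term n)} (hO : IsOrderIdeal O) {lab : Term n → ℕ}
    (hlab : DegOrderedLabeling O lab) {g : Term n → MvPolynomial (Fin (n + 1)) K}
    (hg : IsPrebasis O g) :
    ∀ m (μ : Term n), ind O μ ≤ m →
      monomial μ (1 : K) ∈
        Submodule.span K (reductorsDeg O lab g (tdeg μ)) ⊔ spanTerms K (Od O (tdeg μ)) := by
  intro m
  induction m with
  | zero =>
    intro μ hm
    have h0 : μ ∈ O := by
      have := mem_borderClosure_ind hO μ
      rw [Nat.le_zero.mp hm] at this
      exact this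
    exact Submodule.mem_sup_right (Submodule.subset_span ⟨μ, ⟨h0, rfl⟩, rfl⟩)
  | succ m ih =>
    intro μ hm
    by_cases hμ : μ ∈ O
    · exact Submodule.mem_sup_right (Submodule.subset_span ⟨μ, ⟨hμ, rfl⟩, rfl⟩)
    obtain ⟨σ, hσ, η, hη, hμeq, hind⟩ := exists_canonical hO hlab hμ
    have hsplit : monomial μ (1 : K) = (monomial η (1 : K) * g σ) +
        ∑ τ ∈ (monomial σ (1 : K) - g σ).support,
          ((monomial σ (1 : K) - g σ).coeff τ) • monomial (η + τ) (1 : K) := by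
      rw [reductor_eq η, hμeq]; ring
    rw [hsplit]
    apply Submodule.add_mem
    · apply Submodule.mem_sup_left
      apply Submodule.subset_span
      refine ⟨⟨σ, hσ, η, hη, rfl⟩, ?_⟩
      rw [hμeq]
      exact reductor_isHomogeneous hg hσ η
    · apply Submodule.sum_mem
      intro τ hτ
      apply Submodule.smul_mem
      obtain ⟨hτO, hτdeg⟩ := hg σ hσ τ hτ
      have hdeq : tdeg (η + τ) = tdeg μ := by
        rw [tdeg_add, hτdeg, hμeq, tdeg_add]
      have hindτ : ind O (η + τ) ≤ m := by
        have := ind_add_le hτO η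
        omega
      have := ih (η + τ) hindτ
      rwa [hdeq] at this

lemma disjoint_aux {O : Set (Term n)} (hO : IsOrderIdeal O) {lab : Term n → ℕ}
    (hlab : DegOrderedLabeling O lab) {g : Term n → MvPolynomial (Fin (n + 1)) K}
    (hg : IsPrebasis O g) :
    Disjoint (Submodule.span K (reductors O lab g)) (spanTerms K O) := by
  classical
  have H : ∀ μ : Term n, ∃ p : Term n × Term n,
      μ ∉ O → p.2 ∈ border O ∧ p.1 ∈ mulSet O lab p.2 ∧ μ = p.1 + p.2 ∧
        tdeg p.1 + 1 ≤ ind O μ := by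
    intro μ
    by_cases hμ : μ ∈ O
    · exact ⟨(0, 0), fun h => absurd hμ h⟩
    · obtain ⟨σ, hσ, η, hη, h1, h2⟩ := exists_canonical hO hlab hμ
      exact ⟨(η, σ), fun _ => ⟨hσ, hη, h1, h2⟩⟩
  choose cp hcp using H
  set b : Term n → MvPolynomial (Fin (n + 1)) K :=
    fun μ => if μ ∈ O then monomial μ 1 else monomial (cp μ).1 1 * g (cp μ).2 with hb
  -- coefficient of `b μ` at `μ` is 1
  have hcoeff : ∀ μ, (b μ).coeff μ = 1 := by
    intro μ
    by_cases hμ : μ ∈ O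
    · simp [hb, hμ, coeff_monomial]
    · obtain ⟨hσ, hη, h1, _⟩ := hcp μ hμ
      have h2 := coeff_pivot hg hσ (cp μ).1
      rw [← h1] at h2
      simpa [hb, if_neg hμ] using h2
  -- support of `b μ` is `μ` together with terms of strictly smaller index
  have hsupp : ∀ μ ν, ν ∈ (b μ).support → ν = μ ∨ ind O ν < ind O μ := by
    intro μ ν hν
    by_cases hμ : μ ∈ O
    · left
      simp only [hb, if_pos hμ, support_monomial] at hν
      simpa using hν
    · obtain ⟨hσ, hη, h1, h2⟩ := hcp μ hμ
      simp only [hb, if_neg hμ] at hν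
      rcases support_reductor _ hν with h | ⟨τ, hτ, rfl⟩
      · left; rw [h, ← h1]
      · right
        have hτO := (hg _ hσ τ hτ).1
        have := ind_add_le hτO (cp μ).1
        omega
  -- linear independence of `b`
  have hli : LinearIndependent K b := by
    rw [linearIndependent_iff']
    intro s c hsum i hi
    by_contra hci
    set T := s.filter (fun j => c j ≠ 0) with hT
    have hTne : T.Nonempty := ⟨i, Finset.mem_filter.mpr ⟨hi, hci⟩⟩
    obtain ⟨μ0, hμ0T, hmax⟩ := T.exists_max_image (ind O) hTne
    have hμ0s : μ0 ∈ s := (Finset.mem_filter.mp hμ0T).1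
    have hc0 : c μ0 ≠ 0 := (Finset.mem_filter.mp hμ0T).2
    have hco : (∑ j ∈ s, c j • b j).coeff μ0 = c μ0 := by
      rw [coeff_sum]
      rw [Finset.sum_eq_single_of_mem μ0 hμ0s]
      · rw [coeff_smul, hcoeff, smul_eq_mul, mul_one]
      · intro j hj hne
        by_cases hcj : c j = 0
        · rw [hcj, zero_smul, coeff_zero]
        · have hjT : j ∈ T := Finset.mem_filter.mpr ⟨hj, hcj⟩
          rw [coeff_smul]
          have : (b j).coeff μ0 = 0 := by
            by_contra hb0
            have hmem : μ0 ∈ (b j).support := MvPolynomial.mem_support_iff.mpr hb0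
            rcases hsupp j μ0 hmem with h | h
            · exact hne h.symm
            · exact absurd (hmax j hjT) (not_le.mpr h)
          rw [this, smul_zero]
    rw [hsum, coeff_zero] at hco
    exact hc0 hco.symm
  -- identify the two spans
  have hOspan : spanTerms K O = Submodule.span K (b '' O) := by
    unfold spanTerms
    congr 1
    apply Set.image_congr
    intro μ hμ
    simp [hb, hμ]
  have hred : reductors O lab g ⊆ b '' Oᶜ := by
    rintro p ⟨σ, hσ, η, hη, rfl⟩
    have hμ : η + σ ∉ O := pivot_not_mem hO hσ η
    refine ⟨η + σ, hμ, ?_⟩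
    obtain ⟨hσ', hη', h1, _⟩ := hcp (η + σ) hμ
    obtain ⟨hs, he⟩ := canonical_unique hlab hσ' hη' hσ hη h1.symm
    simp only [hb, if_neg hμ, hs, he]
  have := hli.disjoint_span_image (s := Oᶜ) (t := O) disjoint_compl_left
  rw [hOspan]
  exact Disjoint.mono_left (Submodule.span_mono hred) this

/-- **Direct sum decomposition.** `P = ⟨𝒯G⟩ ⊕ ⟨𝒪⟩`, and `P_d = ⟨𝒯G_d⟩ ⊕ ⟨𝒪_d⟩` for every `d`. -/
theorem span_reductors_isCompl (O : Set (Term n)) (hO : IsOrderIdeal O)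
    (lab : Term n → ℕ) (hlab : DegOrderedLabeling O lab)
    (g : Term n → MvPolynomial (Fin (n + 1)) K) (hg : IsPrebasis O g) :
    IsCompl (Submodule.span K (reductors O lab g)) (spanTerms K O) ∧
    ∀ d : ℕ,
      Submodule.span K (reductorsDeg O lab g d) ⊔ spanTerms K (Od O d) =
        homogeneousSubmodule (Fin (n + 1)) K d ∧
      Disjoint (Submodule.span K (reductorsDeg O lab g d)) (spanTerms K (Od O d)) := by
  classical
  have hOd_sub : ∀ d : ℕ, Od O d ⊆ O := fun d τ hτ => hτ.1
  have hdisj : ∀ d : ℕ,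
      Disjoint (Submodule.span K (reductorsDeg O lab g d)) (spanTerms K (Od O d)) := by
    intro d
    exact (disjoint_aux hO hlab hg).mono
      (Submodule.span_mono Set.inter_subset_left)
      (Submodule.span_mono (Set.image_mono (hOd_sub d)))
  have hsmul : ∀ (v : Term n) (c : K),
      (monomial v c : MvPolynomial (Fin (n + 1)) K) = c • monomial v (1 : K) := by
    intro v c
    rw [smul_monomial, smul_eq_mul, mul_one]
  refine ⟨⟨disjoint_aux hO hlab hg, ?_⟩, fun d => ⟨?_, hdisj d⟩⟩
  · rw [codisjoint_iff, eq_top_iff]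
    intro f _
    rw [f.as_sum]
    apply Submodule.sum_mem
    intro v hv
    have h1 := monomial_mem_sup hO hlab hg (ind O v) v le_rfl
    have h2 : Submodule.span K (reductorsDeg O lab g (tdeg v)) ⊔ spanTerms K (Od O (tdeg v)) ≤
        Submodule.span K (reductors O lab g) ⊔ spanTerms K O :=
      sup_le_sup (Submodule.span_mono Set.inter_subset_left)
        (Submodule.span_mono (Set.image_mono (hOd_sub (tdeg v))))
    rw [hsmul]
    exact Submodule.smul_mem _ _ (h2 h1)
  · apply le_antisymm
    · apply sup_le
      · rw [Submodule.span_le]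
        rintro p ⟨_, hh⟩
        exact (mem_homogeneousSubmodule d p).2 hh
      · rw [spanTerms, Submodule.span_le]
        rintro q ⟨τ, hτ, rfl⟩
        exact (mem_homogeneousSubmodule _ _).2
          (isHomogeneous_monomial _ (by rw [tdeg_eq_degree, hτ.2]))
    · intro f hf
      rw [mem_homogeneousSubmodule] at hf
      rw [f.as_sum]
      apply Submodule.sum_mem
      intro v hv
      have hdv : tdeg v = d := by
        have := hf (MvPolynomial.mem_support_iff.mp hv)
        rw [← DFunLike.congr_fun (g := Finsupp.weight 1) Finsupp.degree_eq_weight_one v, tdeg_eq_degree] at this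
        exact this
      have h1 := monomial_mem_sup hO hlab hg (ind O v) v le_rfl
      rw [hdv] at h1
      rw [hsmul]
      exact Submodule.smul_mem _ _ h1

end Border
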